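/- arXiv:1512.06293 — 5 statements merged into one kernel-verified Lean document; each statement's English description precedes it below -/
import Mathlib

section
/- For each k = 1, …, n, let {g_{λ_k}}_{λ_k∈Λ_k} ⊆ L¹(ℝ^d) ∩ L²(ℝ^d), Λ_k countable, satisfy the Bessel bound Σ_{λ_k∈Λ_k} ‖f∗g_{λ_k}‖₂² ≤ B_k‖f‖₂² for all f ∈ L²(ℝ^d); let M_k, P_k : L²(ℝ^d) → L²(ℝ^d) be Lipschitz with constants L_k and R_k respectively, with M_k0 = 0 and P_k0 = 0, and let S_k ≥ 1. Define U_k[λ_k]f := S_k^{d/2} P_k(M_k(f∗g_{λ_k}))(S_k·) and, for a path q = (λ₁,…,λ_n) ∈ Λ₁×⋯×Λ_n, U[q]f := U_n[λ_n]⋯U₁[λ₁]f. Then for every such path q and every f ∈ L²(ℝ^d): ‖U[q]f‖₂² ≤ (∏_{k=1}^n B_k L_k² R_k²) ‖f‖₂². -/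
open MeasureTheory
open scoped ENNReal FourierTransform

noncomputable section

/-- `ℝ^d` as a Euclidean space. -/
abbrev Ed (d : ℕ) : Type := EuclideanSpace ℝ (Fin d)

/-- Convolution `(f ∗ g)(x) = ∫ f(y) g(x − y) dy`. -/
def convol {d : ℕ} (f g : Ed d → ℂ) : Ed d → ℂ := fun x => ∫ y, f y * g (x - y)

/-- One network layer: `U[λ]f = S^{d/2} · P(M(f ∗ g))(S·)`. -/
def layerU {d : ℕ} (S : ℝ) (P M : (Ed d → ℂ) → (Ed d → ℂ)) (g : Ed d → ℂ)
    (f : Ed d → ℂ) : Ed d → ℂ :=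
  fun x => ((S ^ ((d : ℝ) / 2) : ℝ) : ℂ) * P (M (convol f g)) (S • x)

lemma convol_aesm {d : ℕ} (f g : Ed d → ℂ) (hf : AEStronglyMeasurable f volume)
    (hg : AEStronglyMeasurable g volume) : AEStronglyMeasurable (convol f g) volume := by
  have h := hf.convolution_integrand (ContinuousLinearMap.mul ℂ ℂ) hg
    (μ := (volume : Measure (Ed d))) (ν := volume)
  exact h.integral_prod_right'

lemma smul_qmp {d : ℕ} {S : ℝ} (hS : S ≠ 0) :
    Measure.QuasiMeasurePreserving (fun x : Ed d => S • x) volume volume := by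
  refine ⟨(measurable_const_smul S), ?_⟩
  rw [Measure.map_addHaar_smul volume hS]
  exact Measure.smul_absolutelyContinuous

lemma sq_ne_top {a : ℝ≥0∞} (h : a ^ 2 ≠ ⊤) : a ≠ ⊤ := fun ha => h (by simp [ha])

lemma dilate_sq {d : ℕ} (F : Ed d → ℂ) (hF : AEStronglyMeasurable F volume) {S : ℝ}
    (hS : 0 < S) :
    eLpNorm (fun x : Ed d => ((S ^ ((d : ℝ) / 2) : ℝ) : ℂ) * F (S • x)) 2 volume ^ 2
      = eLpNorm F 2 volume ^ 2 := by
  set c : ℂ := ((S ^ ((d : ℝ) / 2) : ℝ) : ℂ) with hcdef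
  have hmap : Measure.map (fun x : Ed d => S • x) volume
      = ENNReal.ofReal |(S ^ Module.finrank ℝ (Ed d))⁻¹| • volume :=
    Measure.map_addHaar_smul volume hS.ne'
  have hF' : AEStronglyMeasurable F (Measure.map (fun x : Ed d => S • x) volume) := by
    rw [hmap]; exact hF.mono_ac Measure.smul_absolutelyContinuous
  have h1 : eLpNorm F 2 (Measure.map (fun x : Ed d => S • x) volume)
      = eLpNorm (fun x => F (S • x)) 2 volume :=
    eLpNorm_map_measure hF' (measurable_const_smul S).aemeasurable
  have h2 : eLpNorm (fun x : Ed d => c * F (S • x)) 2 volume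
      = (‖c‖₊ : ℝ≥0∞) * eLpNorm (fun x => F (S • x)) 2 volume := by
    have : (fun x : Ed d => c * F (S • x)) = c • fun x => F (S • x) := by
      funext x; simp [smul_eq_mul]
    rw [this, eLpNorm_const_smul, enorm_eq_nnnorm]
  have hD : Module.finrank ℝ (Ed d) = d := finrank_euclideanSpace_fin
  have hSd : (0:ℝ) < S ^ d := pow_pos hS d
  have hc : ((‖c‖₊ : ℝ≥0∞)) = ENNReal.ofReal (S ^ ((d:ℝ)/2)) := by
    rw [← enorm_eq_nnnorm, ← ofReal_norm_eq_enorm, hcdef, Complex.norm_real,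
      Real.norm_eq_abs, abs_of_nonneg (Real.rpow_nonneg hS.le _)]
  have ht : ((1:ℝ≥0∞)/2).toReal = (1/2 : ℝ) := by simp
  rw [h2, ← h1, hmap, eLpNorm_smul_measure_of_ne_top (by norm_num), smul_eq_mul, hD,
    abs_of_nonneg (inv_nonneg.2 hSd.le), ht, mul_pow, mul_pow, hc]
  have e1 : ENNReal.ofReal (S ^ ((d:ℝ)/2)) ^ 2 = ENNReal.ofReal (S ^ d) := by
    rw [← ENNReal.ofReal_pow (Real.rpow_nonneg hS.le _), ← Real.rpow_natCast (S ^ ((d:ℝ)/2)) 2,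
      ← Real.rpow_mul hS.le]
    norm_num
  have e2 : (ENNReal.ofReal ((S ^ d)⁻¹) ^ (1/2:ℝ)) ^ 2 = ENNReal.ofReal ((S ^ d)⁻¹) := by
    rw [← ENNReal.rpow_natCast (ENNReal.ofReal ((S ^ d)⁻¹) ^ (1/2:ℝ)) 2, ← ENNReal.rpow_mul]
    norm_num
  rw [e1, e2, ← mul_assoc, ← ENNReal.ofReal_mul hSd.le, mul_inv_cancel₀ hSd.ne',
    ENNReal.ofReal_one, one_mul]

lemma layer_step {d : ℕ} {Λ : Type} [Countable Λ] (g : Λ → Ed d → ℂ)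
    (hg2 : ∀ lam, MemLp (g lam) 2 volume)
    (B L R S : ℝ) (hB : 0 ≤ B) (hL : 0 ≤ L) (hR : 0 ≤ R) (hS : 0 < S)
    (hBessel : ∀ f : Ed d → ℂ, MemLp f 2 volume →
      ∑' lam, eLpNorm (convol f (g lam)) 2 volume ^ 2 ≤
        ENNReal.ofReal B * eLpNorm f 2 volume ^ 2)
    (M P : (Ed d → ℂ) → (Ed d → ℂ))
    (hMmem : ∀ f : Ed d → ℂ, MemLp f 2 volume → MemLp (M f) 2 volume)
    (hPmem : ∀ f : Ed d → ℂ, MemLp f 2 volume → MemLp (P f) 2 volume)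
    (hMlip : ∀ f h : Ed d → ℂ, MemLp f 2 volume → MemLp h 2 volume →
      eLpNorm (M f - M h) 2 volume ≤ ENNReal.ofReal L * eLpNorm (f - h) 2 volume)
    (hPlip : ∀ f h : Ed d → ℂ, MemLp f 2 volume → MemLp h 2 volume →
      eLpNorm (P f - P h) 2 volume ≤ ENNReal.ofReal R * eLpNorm (f - h) 2 volume)
    (hM0 : M 0 = 0) (hP0 : P 0 = 0)
    (lam : Λ) (f : Ed d → ℂ) (hf : MemLp f 2 volume) :
    MemLp (layerU S P M (g lam) f) 2 volume ∧
      eLpNorm (layerU S P M (g lam) f) 2 volume ^ 2 ≤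
        ENNReal.ofReal (B * L ^ 2 * R ^ 2) * eLpNorm f 2 volume ^ 2 := by
  have hconv_meas : AEStronglyMeasurable (convol f (g lam)) volume :=
    convol_aesm f (g lam) hf.1 (hg2 lam).1
  have hconv_sq : eLpNorm (convol f (g lam)) 2 volume ^ 2
      ≤ ENNReal.ofReal B * eLpNorm f 2 volume ^ 2 :=
    le_trans (ENNReal.le_tsum lam) (hBessel f hf)
  have hRHSfin : ENNReal.ofReal B * eLpNorm f 2 volume ^ 2 ≠ ⊤ :=
    ENNReal.mul_ne_top ENNReal.ofReal_ne_top (ENNReal.pow_ne_top hf.2.ne)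
  have hconvmem : MemLp (convol f (g lam)) 2 volume :=
    ⟨hconv_meas, lt_top_iff_ne_top.2 (sq_ne_top (ne_top_of_le_ne_top hRHSfin hconv_sq))⟩
  have hMnorm : eLpNorm (M (convol f (g lam))) 2 volume
      ≤ ENNReal.ofReal L * eLpNorm (convol f (g lam)) 2 volume := by
    have h := hMlip _ 0 hconvmem MemLp.zero
    simpa [hM0] using h
  have hMm := hMmem _ hconvmem
  have hPnorm : eLpNorm (P (M (convol f (g lam)))) 2 volume
      ≤ ENNReal.ofReal R * eLpNorm (M (convol f (g lam))) 2 volume := by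
    have h := hPlip _ 0 hMm MemLp.zero
    simpa [hP0] using h
  have hPm := hPmem _ hMm
  have hds := dilate_sq (P (M (convol f (g lam)))) hPm.1 hS
  have hlay : layerU S P M (g lam) f
      = fun x => ((S ^ ((d : ℝ) / 2) : ℝ) : ℂ) * (P (M (convol f (g lam)))) (S • x) := rfl
  have key : eLpNorm (layerU S P M (g lam) f) 2 volume ^ 2
      ≤ ENNReal.ofReal (B * L ^ 2 * R ^ 2) * eLpNorm f 2 volume ^ 2 := by
    rw [hlay, hds]
    calc eLpNorm (P (M (convol f (g lam)))) 2 volume ^ 2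
        ≤ (ENNReal.ofReal R * eLpNorm (M (convol f (g lam))) 2 volume) ^ 2 := by
          gcongr
      _ = ENNReal.ofReal (R ^ 2) * eLpNorm (M (convol f (g lam))) 2 volume ^ 2 := by
          rw [mul_pow, ENNReal.ofReal_pow hR]
      _ ≤ ENNReal.ofReal (R ^ 2) *
            (ENNReal.ofReal (L ^ 2) * eLpNorm (convol f (g lam)) 2 volume ^ 2) := by
          gcongr
          calc eLpNorm (M (convol f (g lam))) 2 volume ^ 2
              ≤ (ENNReal.ofReal L * eLpNorm (convol f (g lam)) 2 volume) ^ 2 := by gcongr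
            _ = ENNReal.ofReal (L ^ 2) * eLpNorm (convol f (g lam)) 2 volume ^ 2 := by
                rw [mul_pow, ENNReal.ofReal_pow hL]
      _ ≤ ENNReal.ofReal (R ^ 2) *
            (ENNReal.ofReal (L ^ 2) * (ENNReal.ofReal B * eLpNorm f 2 volume ^ 2)) := by
          gcongr
      _ = ENNReal.ofReal (B * L ^ 2 * R ^ 2) * eLpNorm f 2 volume ^ 2 := by
          rw [← mul_assoc, ← mul_assoc, ← ENNReal.ofReal_mul (by positivity),
            ← ENNReal.ofReal_mul (by positivity)]
          ring_nf
  refine ⟨⟨?_, ?_⟩, key⟩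
  · rw [hlay]
    exact ((hPm.1.comp_quasiMeasurePreserving (smul_qmp hS.ne')).const_mul _)
  · have hfin : eLpNorm (layerU S P M (g lam) f) 2 volume ^ 2 ≠ ⊤ := by
      rw [hlay, hds]
      exact ENNReal.pow_ne_top hPm.2.ne
    exact lt_top_iff_ne_top.2 (sq_ne_top hfin)

lemma main_aux {d : ℕ} : ∀ (n : ℕ) (Λ : Fin n → Type) [∀ k, Countable (Λ k)]
    (g : (k : Fin n) → Λ k → Ed d → ℂ)
    (_hg2 : ∀ k lam, MemLp (g k lam) 2 volume)
    (B L R S : Fin n → ℝ)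
    (_hB : ∀ k, 0 ≤ B k) (_hL : ∀ k, 0 ≤ L k) (_hR : ∀ k, 0 ≤ R k) (_hS : ∀ k, 0 < S k)
    (_hBessel : ∀ k, ∀ f : Ed d → ℂ, MemLp f 2 volume →
      ∑' lam, eLpNorm (convol f (g k lam)) 2 volume ^ 2 ≤
        ENNReal.ofReal (B k) * eLpNorm f 2 volume ^ 2)
    (M P : Fin n → (Ed d → ℂ) → (Ed d → ℂ))
    (_hMmem : ∀ k, ∀ f : Ed d → ℂ, MemLp f 2 volume → MemLp (M k f) 2 volume)
    (_hPmem : ∀ k, ∀ f : Ed d → ℂ, MemLp f 2 volume → MemLp (P k f) 2 volume)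
    (_hMlip : ∀ k, ∀ f h : Ed d → ℂ, MemLp f 2 volume → MemLp h 2 volume →
      eLpNorm (M k f - M k h) 2 volume ≤ ENNReal.ofReal (L k) * eLpNorm (f - h) 2 volume)
    (_hPlip : ∀ k, ∀ f h : Ed d → ℂ, MemLp f 2 volume → MemLp h 2 volume →
      eLpNorm (P k f - P k h) 2 volume ≤ ENNReal.ofReal (R k) * eLpNorm (f - h) 2 volume)
    (_hM0 : ∀ k, M k 0 = 0) (_hP0 : ∀ k, P k 0 = 0)
    (q : (k : Fin n) → Λ k) (f : Ed d → ℂ) (_hf : MemLp f 2 volume),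
    MemLp (Fin.foldl n (fun h k => layerU (S k) (P k) (M k) (g k (q k)) h) f) 2 volume ∧
    eLpNorm (Fin.foldl n (fun h k => layerU (S k) (P k) (M k) (g k (q k)) h) f) 2 volume ^ 2 ≤
      ENNReal.ofReal (∏ k, B k * L k ^ 2 * R k ^ 2) * eLpNorm f 2 volume ^ 2 := by
  intro n
  induction n with
  | zero =>
    intro Λ _ g hg2 B L R S hB hL hR hS hBessel M P hMmem hPmem hMlip hPlip hM0 hP0 q f hf
    simp only [Fin.foldl_zero, Finset.univ_eq_empty, Finset.prod_empty, ENNReal.ofReal_one,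
      one_mul]
    exact ⟨hf, le_refl _⟩
  | succ n ih =>
    intro Λ _ g hg2 B L R S hB hL hR hS hBessel M P hMmem hPmem hMlip hPlip hM0 hP0 q f hf
    rw [Fin.foldl_succ]
    obtain ⟨hmem0, hbd0⟩ := layer_step (g 0) (hg2 0) (B 0) (L 0) (R 0) (S 0)
      (hB 0) (hL 0) (hR 0) (hS 0) (hBessel 0) (M 0) (P 0) (hMmem 0) (hPmem 0)
      (hMlip 0) (hPlip 0) (hM0 0) (hP0 0) (q 0) f hf
    obtain ⟨hmem, hbd⟩ := ih (fun k => Λ k.succ) (fun k => g k.succ)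
      (fun k lam => hg2 k.succ lam) (fun k => B k.succ) (fun k => L k.succ)
      (fun k => R k.succ) (fun k => S k.succ) (fun k => hB k.succ) (fun k => hL k.succ)
      (fun k => hR k.succ) (fun k => hS k.succ) (fun k => hBessel k.succ)
      (fun k => M k.succ) (fun k => P k.succ) (fun k => hMmem k.succ) (fun k => hPmem k.succ)
      (fun k => hMlip k.succ) (fun k => hPlip k.succ) (fun k => hM0 k.succ) (fun k => hP0 k.succ)
      (fun k => q k.succ) (layerU (S 0) (P 0) (M 0) (g 0 (q 0)) f) hmem0
    refine ⟨hmem, le_trans hbd ?_⟩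
    have hprod : (∏ k : Fin (n + 1), B k * L k ^ 2 * R k ^ 2)
        = (B 0 * L 0 ^ 2 * R 0 ^ 2) * ∏ k : Fin n, B k.succ * L k.succ ^ 2 * R k.succ ^ 2 :=
      Fin.prod_univ_succ _
    have hnn : (0:ℝ) ≤ ∏ k : Fin n, B k.succ * L k.succ ^ 2 * R k.succ ^ 2 :=
      Finset.prod_nonneg fun k _ => by
        have := hB k.succ; have := hL k.succ; have := hR k.succ; positivity
    calc ENNReal.ofReal (∏ k : Fin n, B k.succ * L k.succ ^ 2 * R k.succ ^ 2) *
          eLpNorm (layerU (S 0) (P 0) (M 0) (g 0 (q 0)) f) 2 volume ^ 2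
        ≤ ENNReal.ofReal (∏ k : Fin n, B k.succ * L k.succ ^ 2 * R k.succ ^ 2) *
          (ENNReal.ofReal (B 0 * L 0 ^ 2 * R 0 ^ 2) * eLpNorm f 2 volume ^ 2) := by gcongr
      _ = ENNReal.ofReal (∏ k : Fin (n + 1), B k * L k ^ 2 * R k ^ 2) *
          eLpNorm f 2 volume ^ 2 := by
          rw [hprod, ← mul_assoc, ← ENNReal.ofReal_mul hnn, mul_comm
            (∏ k : Fin n, B k.succ * L k.succ ^ 2 * R k.succ ^ 2) (B 0 * L 0 ^ 2 * R 0 ^ 2)]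

/-- Norm bound for iterated layer operators along a path. -/
theorem stmt_4 {d n : ℕ} {Λ : Fin n → Type} [∀ k, Countable (Λ k)]
    (g : (k : Fin n) → Λ k → Ed d → ℂ)
    (hg1 : ∀ k lam, MemLp (g k lam) 1 volume) (hg2 : ∀ k lam, MemLp (g k lam) 2 volume)
    (B L R S : Fin n → ℝ)
    (hB : ∀ k, 0 < B k) (hL : ∀ k, 0 ≤ L k) (hR : ∀ k, 0 ≤ R k) (hS : ∀ k, 1 ≤ S k)
    (hBessel : ∀ k, ∀ f : Ed d → ℂ, MemLp f 2 volume →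
      ∑' lam, eLpNorm (convol f (g k lam)) 2 volume ^ 2 ≤
        ENNReal.ofReal (B k) * eLpNorm f 2 volume ^ 2)
    (M P : Fin n → (Ed d → ℂ) → (Ed d → ℂ))
    (hMmem : ∀ k, ∀ f : Ed d → ℂ, MemLp f 2 volume → MemLp (M k f) 2 volume)
    (hPmem : ∀ k, ∀ f : Ed d → ℂ, MemLp f 2 volume → MemLp (P k f) 2 volume)
    (hMlip : ∀ k, ∀ f h : Ed d → ℂ, MemLp f 2 volume → MemLp h 2 volume →
      eLpNorm (M k f - M k h) 2 volume ≤ ENNReal.ofReal (L k) * eLpNorm (f - h) 2 volume)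
    (hPlip : ∀ k, ∀ f h : Ed d → ℂ, MemLp f 2 volume → MemLp h 2 volume →
      eLpNorm (P k f - P k h) 2 volume ≤ ENNReal.ofReal (R k) * eLpNorm (f - h) 2 volume)
    (hM0 : ∀ k, M k 0 = 0) (hP0 : ∀ k, P k 0 = 0)
    (q : (k : Fin n) → Λ k) (f : Ed d → ℂ) (hf : MemLp f 2 volume) :
    eLpNorm (Fin.foldl n (fun h k => layerU (S k) (P k) (M k) (g k (q k)) h) f) 2 volume ^ 2 ≤
      ENNReal.ofReal (∏ k, B k * L k ^ 2 * R k ^ 2) * eLpNorm f 2 volume ^ 2 :=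
  (main_aux n Λ g hg2 B L R S (fun k => (hB k).le) hL hR
    (fun k => lt_of_lt_of_le one_pos (hS k)) hBessel M P hMmem hPmem hMlip hPlip hM0 hP0
    q f hf).2
end
end

section
/- Let {g_λ}_{λ∈Λ} ∪ {χ} ⊆ L¹(ℝ^d) ∩ L²(ℝ^d), Λ countable, satisfy the frame upper bound ‖f∗χ‖₂² + Σ_{λ∈Λ} ‖f∗g_λ‖₂² ≤ B‖f‖₂² for all f ∈ L²(ℝ^d). Let M, P : L²(ℝ^d) → L²(ℝ^d) be Lipschitz with constants L and R respectively, with M0 = 0 and P0 = 0, let S ≥ 1, and set U[λ]f := S^{d/2} P(M(f∗g_λ))(S·). Then for all f, h ∈ L²(ℝ^d): ‖f∗χ − h∗χ‖₂² + Σ_{λ∈Λ} ‖U[λ]f − U[λ]h‖₂² ≤ max{B, B L² R²} · ‖f − h‖₂². In particular (taking h = 0), ‖f∗χ‖₂² + Σ_{λ∈Λ} ‖U[λ]f‖₂² ≤ max{B, B L² R²} · ‖f‖₂². -/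
open MeasureTheory
open scoped ENNReal FourierTransform

noncomputable section

lemma aux_aesm_convol {d : ℕ} {f g : Ed d → ℂ} (hf : AEStronglyMeasurable f volume)
    (hg : AEStronglyMeasurable g volume) : AEStronglyMeasurable (convol f g) volume := by
  have h := hf.convolution_integrand (ContinuousLinearMap.mul ℝ ℂ) hg
    (μ := (volume : Measure (Ed d))) (ν := (volume : Measure (Ed d)))
  exact h.integral_prod_right'

lemma aux_integrable {d : ℕ} {f g : Ed d → ℂ} (hf : MemLp f 2 volume)
    (hg : MemLp g 2 volume) (x : Ed d) :
    Integrable (fun y => f y * g (x - y)) volume := by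
  have h2 : MemLp (fun y => g (x - y)) 2 (volume : Measure (Ed d)) :=
    hg.comp_measurePreserving (Measure.measurePreserving_sub_left volume x)
  have h1 : MemLp (f • fun y => g (x - y)) 1 (volume : Measure (Ed d)) :=
    h2.smul hf
  exact memLp_one_iff_integrable.mp h1

lemma aux_convsub {d : ℕ} {f h g : Ed d → ℂ} (hf : MemLp f 2 volume)
    (hh : MemLp h 2 volume) (hg : MemLp g 2 volume) :
    convol f g - convol h g = convol (f - h) g := by
  funext x
  simp only [Pi.sub_apply, convol]
  rw [← integral_sub (aux_integrable hf hg x) (aux_integrable hh hg x)]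
  congr 1; funext y; ring

lemma aux_scale {d : ℕ} {S : ℝ} (hS : 1 ≤ S) (φ : Ed d → ℂ)
    (hφ : AEStronglyMeasurable φ volume) :
    eLpNorm (fun x => ((S ^ ((d : ℝ) / 2) : ℝ) : ℂ) * φ (S • x)) 2 volume
      = eLpNorm φ 2 volume := by
  have hS0 : (0:ℝ) < S := lt_of_lt_of_le one_pos hS
  have hSne : S ≠ 0 := ne_of_gt hS0
  have hmap : Measure.map (S • ·) (volume : Measure (Ed d))
      = ENNReal.ofReal |((S ^ Module.finrank ℝ (Ed d))⁻¹)| • volume :=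
    Measure.map_addHaar_smul volume hSne
  have hφ' : AEStronglyMeasurable φ (Measure.map (S • ·) (volume : Measure (Ed d))) := by
    rw [hmap]
    exact hφ.mono_ac Measure.smul_absolutelyContinuous
  have h1 : eLpNorm (fun x => φ (S • x)) 2 (volume : Measure (Ed d))
      = eLpNorm φ 2 (Measure.map (S • ·) (volume : Measure (Ed d))) := by
    rw [eLpNorm_map_measure hφ' (measurable_const_smul S).aemeasurable]
    rfl
  have hfe : (fun x => ((S ^ ((d : ℝ) / 2) : ℝ) : ℂ) * φ (S • x))
      = ((S ^ ((d : ℝ) / 2) : ℝ) : ℂ) • (fun x => φ (S • x)) := by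
    funext x; simp [smul_eq_mul]
  have hne : ENNReal.ofReal |((S ^ Module.finrank ℝ (Ed d))⁻¹)| ≠ 0 := by
    rw [Ne, ENNReal.ofReal_eq_zero, not_le]
    positivity
  rw [hfe, eLpNorm_const_smul, h1, hmap,
    eLpNorm_smul_measure_of_ne_zero hne, smul_eq_mul, ← mul_assoc]
  have hd : Module.finrank ℝ (Ed d) = d := finrank_euclideanSpace_fin
  have habs : |((S ^ Module.finrank ℝ (Ed d))⁻¹)| = (S ^ d)⁻¹ := by
    rw [hd, abs_of_pos (by positivity)]
  have htr : ((1 : ℝ≥0∞) / 2).toReal = 1 / 2 := by norm_num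
  have hnn : ‖((S ^ ((d : ℝ) / 2) : ℝ) : ℂ)‖ₑ = ENNReal.ofReal (S ^ ((d : ℝ) / 2)) := by
    rw [← ofReal_norm, Complex.norm_real,
      Real.norm_eq_abs, abs_of_pos (Real.rpow_pos_of_pos hS0 _)]
  have hrw : ENNReal.ofReal |((S ^ Module.finrank ℝ (Ed d))⁻¹)| ^ ((1 : ℝ≥0∞) / 2).toReal
      = ENNReal.ofReal (((S ^ d : ℝ))⁻¹ ^ ((1:ℝ)/2)) := by
    rw [habs, htr, ENNReal.ofReal_rpow_of_pos (by positivity)]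
  rw [hnn, hrw, ← ENNReal.ofReal_mul (by positivity)]
  have hreal : S ^ ((d : ℝ) / 2) * ((S ^ d : ℝ))⁻¹ ^ ((1:ℝ)/2) = 1 := by
    rw [Real.inv_rpow (by positivity), ← Real.rpow_natCast S d,
      ← Real.rpow_mul hS0.le]
    rw [show (d : ℝ) * (1/2) = (d : ℝ) / 2 by ring]
    exact mul_inv_cancel₀ (Real.rpow_pos_of_pos hS0 _).ne'
  rw [hreal, ENNReal.ofReal_one, one_mul]

/-- One-layer Lipschitz/telescoping estimate combining the output atom χ and the
propagating layer operators. -/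
theorem stmt_5 {d : ℕ} {Λ : Type} [Countable Λ]
    (g : Λ → Ed d → ℂ) (χ : Ed d → ℂ)
    (hg1 : ∀ lam, MemLp (g lam) 1 volume) (hg2 : ∀ lam, MemLp (g lam) 2 volume)
    (hχ1 : MemLp χ 1 volume) (hχ2 : MemLp χ 2 volume)
    (B : ℝ) (hB : 0 < B)
    (hUpper : ∀ f : Ed d → ℂ, MemLp f 2 volume →
      eLpNorm (convol f χ) 2 volume ^ 2 +
          ∑' lam, eLpNorm (convol f (g lam)) 2 volume ^ 2 ≤
        ENNReal.ofReal B * eLpNorm f 2 volume ^ 2)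
    (M P : (Ed d → ℂ) → (Ed d → ℂ)) (L R S : ℝ)
    (hL : 0 ≤ L) (hR : 0 ≤ R) (hS : 1 ≤ S)
    (hMmem : ∀ f : Ed d → ℂ, MemLp f 2 volume → MemLp (M f) 2 volume)
    (hPmem : ∀ f : Ed d → ℂ, MemLp f 2 volume → MemLp (P f) 2 volume)
    (hMlip : ∀ f h : Ed d → ℂ, MemLp f 2 volume → MemLp h 2 volume →
      eLpNorm (M f - M h) 2 volume ≤ ENNReal.ofReal L * eLpNorm (f - h) 2 volume)
    (hPlip : ∀ f h : Ed d → ℂ, MemLp f 2 volume → MemLp h 2 volume →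
      eLpNorm (P f - P h) 2 volume ≤ ENNReal.ofReal R * eLpNorm (f - h) 2 volume)
    (hM0 : M 0 = 0) (hP0 : P 0 = 0) :
    (∀ f h : Ed d → ℂ, MemLp f 2 volume → MemLp h 2 volume →
      eLpNorm (convol f χ - convol h χ) 2 volume ^ 2 +
          ∑' lam,
            eLpNorm (layerU S P M (g lam) f - layerU S P M (g lam) h) 2 volume ^ 2 ≤
        ENNReal.ofReal (max B (B * L ^ 2 * R ^ 2)) * eLpNorm (f - h) 2 volume ^ 2) ∧
    (∀ f : Ed d → ℂ, MemLp f 2 volume →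
      eLpNorm (convol f χ) 2 volume ^ 2 +
          ∑' lam, eLpNorm (layerU S P M (g lam) f) 2 volume ^ 2 ≤
        ENNReal.ofReal (max B (B * L ^ 2 * R ^ 2)) * eLpNorm f 2 volume ^ 2) := by
  have memconv : ∀ (u : Ed d → ℂ), MemLp u 2 volume → ∀ lam,
      MemLp (convol u (g lam)) 2 volume := by
    intro u hu lam
    refine ⟨aux_aesm_convol hu.1 (hg2 lam).1, ?_⟩
    have h1 : eLpNorm (convol u (g lam)) 2 volume ^ 2
        ≤ ENNReal.ofReal B * eLpNorm u 2 volume ^ 2 := by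
      refine le_trans ?_ (hUpper u hu)
      calc eLpNorm (convol u (g lam)) 2 volume ^ 2
          ≤ ∑' l, eLpNorm (convol u (g l)) 2 volume ^ 2 := ENNReal.le_tsum lam
        _ ≤ _ := le_add_self
    have hfin : eLpNorm (convol u (g lam)) 2 volume ^ 2 < ⊤ :=
      lt_of_le_of_lt h1
        (ENNReal.mul_lt_top ENNReal.ofReal_lt_top (ENNReal.pow_lt_top hu.2))
    rw [lt_top_iff_ne_top] at hfin ⊢
    intro he
    exact hfin (by rw [he]; simp)
  have main : ∀ f h : Ed d → ℂ, MemLp f 2 volume → MemLp h 2 volume →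
      eLpNorm (convol f χ - convol h χ) 2 volume ^ 2 +
          ∑' lam,
            eLpNorm (layerU S P M (g lam) f - layerU S P M (g lam) h) 2 volume ^ 2 ≤
        ENNReal.ofReal (max B (B * L ^ 2 * R ^ 2)) * eLpNorm (f - h) 2 volume ^ 2 := by
    intro f h hf hh
    have hu : MemLp (f - h) 2 volume := hf.sub hh
    have hchi : convol f χ - convol h χ = convol (f - h) χ := aux_convsub hf hh hχ2
    have hlam : ∀ lam, eLpNorm (layerU S P M (g lam) f - layerU S P M (g lam) h) 2 volume
        ≤ ENNReal.ofReal (R * L) * eLpNorm (convol (f - h) (g lam)) 2 volume := by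
      intro lam
      have mcf := memconv f hf lam
      have mch := memconv h hh lam
      have hψ : MemLp (P (M (convol f (g lam))) - P (M (convol h (g lam)))) 2 volume :=
        (hPmem _ (hMmem _ mcf)).sub (hPmem _ (hMmem _ mch))
      have hdiff : layerU S P M (g lam) f - layerU S P M (g lam) h
          = fun x => ((S ^ ((d : ℝ) / 2) : ℝ) : ℂ) *
              (P (M (convol f (g lam))) - P (M (convol h (g lam)))) (S • x) := by
        funext x
        simp only [layerU, Pi.sub_apply, mul_sub]
      rw [hdiff, aux_scale hS _ hψ.1]
      calc eLpNorm (P (M (convol f (g lam))) - P (M (convol h (g lam)))) 2 volume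
          ≤ ENNReal.ofReal R *
              eLpNorm (M (convol f (g lam)) - M (convol h (g lam))) 2 volume :=
            hPlip _ _ (hMmem _ mcf) (hMmem _ mch)
        _ ≤ ENNReal.ofReal R * (ENNReal.ofReal L *
              eLpNorm (convol f (g lam) - convol h (g lam)) 2 volume) :=
            mul_le_mul_right (hMlip _ _ mcf mch) _
        _ = ENNReal.ofReal (R * L) * eLpNorm (convol (f - h) (g lam)) 2 volume := by
            rw [aux_convsub hf hh (hg2 lam), ENNReal.ofReal_mul hR, mul_assoc]
    have hsum : ∑' lam,
          eLpNorm (layerU S P M (g lam) f - layerU S P M (g lam) h) 2 volume ^ 2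
        ≤ ENNReal.ofReal ((R * L) ^ 2) *
            ∑' lam, eLpNorm (convol (f - h) (g lam)) 2 volume ^ 2 := by
      rw [← ENNReal.tsum_mul_left]
      refine ENNReal.tsum_le_tsum fun lam => ?_
      calc eLpNorm (layerU S P M (g lam) f - layerU S P M (g lam) h) 2 volume ^ 2
          ≤ (ENNReal.ofReal (R * L) * eLpNorm (convol (f - h) (g lam)) 2 volume) ^ 2 :=
            pow_le_pow_left' (hlam lam) 2
        _ = _ := by rw [mul_pow, ← ENNReal.ofReal_pow (by positivity)]
    have hB' := hUpper (f - h) hu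
    rw [hchi]
    set A := eLpNorm (convol (f - h) χ) 2 volume ^ 2 with hA
    set T := ∑' lam, eLpNorm (convol (f - h) (g lam)) 2 volume ^ 2 with hT
    set q := ENNReal.ofReal ((R * L) ^ 2) with hq
    have key : A + ∑' lam,
          eLpNorm (layerU S P M (g lam) f - layerU S P M (g lam) h) 2 volume ^ 2
        ≤ A + q * T := add_le_add_right hsum A
    rcases le_total (R * L) 1 with hc | hc
    · have h1 : q ≤ 1 := by
        rw [hq, show (1:ℝ≥0∞) = ENNReal.ofReal 1 by simp]
        exact ENNReal.ofReal_le_ofReal (by nlinarith [mul_nonneg hR hL])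
      refine le_trans key (le_trans (add_le_add_right
        (le_trans (mul_le_mul_left h1 T) (by rw [one_mul])) A) ?_)
      refine le_trans hB' (mul_le_mul_left (ENNReal.ofReal_le_ofReal (le_max_left _ _)) _)
    · have h1 : (1:ℝ≥0∞) ≤ q := by
        rw [hq, show (1:ℝ≥0∞) = ENNReal.ofReal 1 by simp]
        exact ENNReal.ofReal_le_ofReal (by nlinarith [mul_nonneg hR hL])
      have hAq : A ≤ q * A := by
        calc A = 1 * A := (one_mul A).symm
          _ ≤ q * A := mul_le_mul_left h1 A
      calc A + ∑' lam,
            eLpNorm (layerU S P M (g lam) f - layerU S P M (g lam) h) 2 volume ^ 2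
          ≤ A + q * T := key
        _ ≤ q * A + q * T := add_le_add_left hAq _
        _ = q * (A + T) := (mul_add q A T).symm
        _ ≤ q * (ENNReal.ofReal B * eLpNorm (f - h) 2 volume ^ 2) := mul_le_mul_right hB' q
        _ = ENNReal.ofReal ((R * L) ^ 2 * B) * eLpNorm (f - h) 2 volume ^ 2 := by
            rw [← mul_assoc, hq, ← ENNReal.ofReal_mul (by positivity)]
        _ ≤ ENNReal.ofReal (max B (B * L ^ 2 * R ^ 2)) * eLpNorm (f - h) 2 volume ^ 2 :=
            mul_le_mul_left (ENNReal.ofReal_le_ofReal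
              (le_trans (le_of_eq (by ring)) (le_max_right _ _))) _
  refine ⟨main, fun f hf => ?_⟩
  have hc0 : ∀ gg : Ed d → ℂ, convol (0 : Ed d → ℂ) gg = 0 := by
    intro gg; funext x; simp [convol]
  have hU0 : ∀ lam, layerU S P M (g lam) (0 : Ed d → ℂ) = 0 := by
    intro lam; funext x; simp [layerU, hc0, hM0, hP0]
  have h2 := main f 0 hf (MemLp.zero)
  simpa [hc0, hU0, sub_zero] using h2
end
end

section
/- Let Ω = ((Ψ_n, M_n, P_n))_{n∈ℕ} be an admissible module-sequence such that every M_n and every P_n commutes with all translations: M_n T_t f = T_t M_n f and P_n T_t f = T_t P_n f for all f ∈ L²(ℝ^d), t ∈ ℝ^d, n ≥ 1. Then the features of the n-th layer satisfy, for all f ∈ L²(ℝ^d), t ∈ ℝ^d, n ≥ 1, and all paths q ∈ Λ₁^n: (U[q](T_t f)) ∗ χ_n = T_{t/(S₁⋯S_n)} ((U[q]f) ∗ χ_n); i.e. Φ_Ω^n(T_t f) = T_{t/(S₁⋯S_n)} Φ_Ω^n(f) elementwise. -/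
open MeasureTheory
open scoped ENNReal FourierTransform

noncomputable section

/-- Iterated layer operators along a path q = (λ₁, …, λ_n):
U[q]f = U_n[λ_n] ⋯ U₁[λ₁] f. -/
def pathU {d : ℕ} (Λ : ℕ → Type) (g : (n : ℕ) → Λ n → Ed d → ℂ)
    (M P : ℕ → (Ed d → ℂ) → (Ed d → ℂ)) (S : ℕ → ℝ) (n : ℕ)
    (q : (k : Fin n) → Λ k.1) (f : Ed d → ℂ) : Ed d → ℂ :=
  Fin.foldl n (fun h k => layerU (S k.1) (P k.1) (M k.1) (g k.1 (q k)) h) f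

section AuxLemmas

variable {d : ℕ}

lemma convol_translate (f g : Ed d → ℂ) (t : Ed d) :
    convol (fun x => f (x - t)) g = fun x => convol f g (x - t) := by
  funext x
  show (∫ y, f (y - t) * g (x - y)) = ∫ y, f y * g ((x - t) - y)
  rw [← MeasureTheory.integral_sub_right_eq_self (fun u => f u * g ((x - t) - u)) t]
  congr 1
  funext y
  rw [sub_sub_sub_cancel_right]

lemma aesm_convol {f g : Ed d → ℂ}
    (hf : MeasureTheory.AEStronglyMeasurable f MeasureTheory.volume)
    (hg : MeasureTheory.AEStronglyMeasurable g MeasureTheory.volume) :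
    MeasureTheory.AEStronglyMeasurable (convol f g) MeasureTheory.volume := by
  have hF : MeasureTheory.AEStronglyMeasurable
      (fun p : Ed d × Ed d => f p.2 * g (p.1 - p.2))
      (MeasureTheory.volume.prod MeasureTheory.volume) :=
    by
      have h1 : MeasureTheory.AEStronglyMeasurable (fun p : Ed d × Ed d => f p.2)
          (MeasureTheory.volume.prod MeasureTheory.volume) := hf.comp_snd
      exact h1.mul (hg.comp_quasiMeasurePreserving
      (MeasureTheory.quasiMeasurePreserving_sub MeasureTheory.volume MeasureTheory.volume))
  exact hF.integral_prod_right'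

lemma memLp_comp_smul {φ : Ed d → ℂ} (hφ : MeasureTheory.MemLp φ 2 MeasureTheory.volume)
    {S : ℝ} (hS : S ≠ 0) :
    MeasureTheory.MemLp (fun x => φ (S • x)) 2 MeasureTheory.volume := by
  have hmeas : AEMeasurable (fun x : Ed d => S • x) MeasureTheory.volume :=
    (continuous_const_smul S).measurable.aemeasurable
  have h2 : MeasureTheory.MemLp φ 2
      (MeasureTheory.Measure.map (fun x : Ed d => S • x) MeasureTheory.volume) := by
    rw [show (fun x : Ed d => S • x) = (S • ·) from rfl,
      MeasureTheory.Measure.map_addHaar_smul MeasureTheory.volume hS]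
    exact hφ.smul_measure ENNReal.ofReal_ne_top
  exact h2.comp_of_map hmeas

lemma pathU_succ {Λ : ℕ → Type} (g : (n : ℕ) → Λ n → Ed d → ℂ)
    (M P : ℕ → (Ed d → ℂ) → (Ed d → ℂ)) (S : ℕ → ℝ) (n : ℕ)
    (q : (k : Fin (n + 1)) → Λ k.1) (f : Ed d → ℂ) :
    pathU Λ g M P S (n + 1) q f =
      layerU (S n) (P n) (M n) (g n (q (Fin.last n)))
        (pathU Λ g M P S n (fun k => q k.castSucc) f) := by
  unfold pathU
  rw [Fin.foldl_succ_last]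
  rfl

end AuxLemmas

/-- Translation covariance of the n-th layer features of an admissible module-sequence:
Φ^n(T_t f) = T_{t/(S₁⋯S_n)} Φ^n(f) elementwise. -/
theorem stmt_8 {d : ℕ}
    {Λ : ℕ → Type} [∀ n, Countable (Λ n)]
    (g : (n : ℕ) → Λ n → Ed d → ℂ) (χ : ℕ → Ed d → ℂ)
    (A B L R S : ℕ → ℝ)
    (M P : ℕ → (Ed d → ℂ) → (Ed d → ℂ))
    (hg1 : ∀ n lam, MemLp (g n lam) 1 volume) (hg2 : ∀ n lam, MemLp (g n lam) 2 volume)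
    (hχ1 : ∀ n, MemLp (χ n) 1 volume) (hχ2 : ∀ n, MemLp (χ n) 2 volume)
    (hA : ∀ n, 0 < A n) (hB : ∀ n, 0 < B n) (hL : ∀ n, 0 ≤ L n) (hR : ∀ n, 0 ≤ R n)
    (hS : ∀ n, 1 ≤ S n)
    (hframe : ∀ (n : ℕ) (f : Ed d → ℂ), MemLp f 2 volume →
      ENNReal.ofReal (A n) * eLpNorm f 2 volume ^ 2 ≤
          eLpNorm (convol f (χ n)) 2 volume ^ 2 +
            ∑' lam : Λ n, eLpNorm (convol f (g n lam)) 2 volume ^ 2 ∧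
        eLpNorm (convol f (χ n)) 2 volume ^ 2 +
            ∑' lam : Λ n, eLpNorm (convol f (g n lam)) 2 volume ^ 2 ≤
          ENNReal.ofReal (B n) * eLpNorm f 2 volume ^ 2)
    (hMmem : ∀ (n : ℕ) (f : Ed d → ℂ), MemLp f 2 volume → MemLp (M n f) 2 volume)
    (hPmem : ∀ (n : ℕ) (f : Ed d → ℂ), MemLp f 2 volume → MemLp (P n f) 2 volume)
    (hMlip : ∀ (n : ℕ) (f h : Ed d → ℂ), MemLp f 2 volume → MemLp h 2 volume →
      eLpNorm (M n f - M n h) 2 volume ≤ ENNReal.ofReal (L n) * eLpNorm (f - h) 2 volume)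
    (hPlip : ∀ (n : ℕ) (f h : Ed d → ℂ), MemLp f 2 volume → MemLp h 2 volume →
      eLpNorm (P n f - P n h) 2 volume ≤ ENNReal.ofReal (R n) * eLpNorm (f - h) 2 volume)
    (hM0 : ∀ n, M n 0 = 0) (hP0 : ∀ n, P n 0 = 0)
    (hadm : ∀ n, max (B n) (B n * L n ^ 2 * R n ^ 2) ≤ 1)
    (hMcomm : ∀ (n : ℕ) (f : Ed d → ℂ), MemLp f 2 volume → ∀ t : Ed d,
      M n (fun x => f (x - t)) = fun x => M n f (x - t))
    (hPcomm : ∀ (n : ℕ) (f : Ed d → ℂ), MemLp f 2 volume → ∀ t : Ed d,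
      P n (fun x => f (x - t)) = fun x => P n f (x - t)) :
    ∀ f : Ed d → ℂ, MemLp f 2 volume → ∀ t : Ed d, ∀ n : ℕ, 1 ≤ n →
      ∀ q : (k : Fin n) → Λ k.1,
        convol (pathU Λ g M P S n q (fun x => f (x - t))) (χ n) =
          fun x => convol (pathU Λ g M P S n q f) (χ n)
            (x - (∏ k ∈ Finset.range n, S k)⁻¹ • t) := by
  intro f hf t n _ q
  -- convolutions with the frame atoms of L² functions are in L²
  have memconv : ∀ (k : ℕ) (lam : Λ k) (h : Ed d → ℂ), MemLp h 2 volume →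
      MemLp (convol h (g k lam)) 2 volume := by
    intro k lam h hh
    refine ⟨aesm_convol hh.1 (hg2 k lam).1, ?_⟩
    have h1 := (hframe k h hh).2
    have h2 : eLpNorm (convol h (g k lam)) 2 volume ^ 2 ≤
        ENNReal.ofReal (B k) * eLpNorm h 2 volume ^ 2 := by
      refine le_trans (le_trans (ENNReal.le_tsum lam) le_add_self) h1
    have hfin : eLpNorm (convol h (g k lam)) 2 volume ^ 2 < ⊤ :=
      lt_of_le_of_lt h2 (ENNReal.mul_lt_top ENNReal.ofReal_lt_top
        (ENNReal.pow_lt_top hh.2))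
    rcases eq_top_or_lt_top (eLpNorm (convol h (g k lam)) 2 volume) with hT | hT
    · rw [hT] at hfin; simp [ENNReal.top_pow] at hfin
    · exact hT
  -- one layer: membership and translation covariance
  have hS0 : ∀ k, (S k) ≠ 0 := fun k => ne_of_gt (lt_of_lt_of_le one_pos (hS k))
  have layer_mem : ∀ (k : ℕ) (lam : Λ k) (h : Ed d → ℂ), MemLp h 2 volume →
      MemLp (layerU (S k) (P k) (M k) (g k lam) h) 2 volume := by
    intro k lam h hh
    have hφ : MemLp (P k (M k (convol h (g k lam)))) 2 volume :=
      hPmem k _ (hMmem k _ (memconv k lam h hh))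
    exact (memLp_comp_smul hφ (hS0 k)).const_mul _
  have layer_trans : ∀ (k : ℕ) (lam : Λ k) (h : Ed d → ℂ), MemLp h 2 volume → ∀ u : Ed d,
      layerU (S k) (P k) (M k) (g k lam) (fun x => h (x - u)) =
        fun x => layerU (S k) (P k) (M k) (g k lam) h (x - (S k)⁻¹ • u) := by
    intro k lam h hh u
    funext x
    show ((((S k) ^ ((d : ℝ) / 2) : ℝ) : ℂ)) *
        P k (M k (convol (fun x => h (x - u)) (g k lam))) (S k • x) = _
    rw [convol_translate h (g k lam) u,
      hMcomm k _ (memconv k lam h hh) u,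
      hPcomm k _ (hMmem k _ (memconv k lam h hh)) u]
    show _ * P k (M k (convol h (g k lam))) (S k • x - u) = _ * P k (M k (convol h (g k lam))) (S k • (x - (S k)⁻¹ • u))
    rw [smul_sub, smul_inv_smul₀ (hS0 k)]
  -- main induction
  have main : ∀ (n : ℕ) (q : (k : Fin n) → Λ k.1),
      MemLp (pathU Λ g M P S n q f) 2 volume ∧
      ∀ s : Ed d, pathU Λ g M P S n q (fun x => f (x - s)) =
        fun x => pathU Λ g M P S n q f (x - (∏ k ∈ Finset.range n, S k)⁻¹ • s) := by
    intro n
    induction n with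
    | zero =>
      intro q
      simp only [pathU, Fin.foldl_zero]
      refine ⟨hf, fun s => ?_⟩
      simp
    | succ n ih =>
      intro q
      obtain ⟨ihmem, ihtr⟩ := ih (fun k => q k.castSucc)
      constructor
      · rw [pathU_succ]
        exact layer_mem n _ _ ihmem
      · intro s
        rw [pathU_succ, pathU_succ, ihtr s,
          layer_trans n (q (Fin.last n)) _ ihmem ((∏ k ∈ Finset.range n, S k)⁻¹ • s)]
        have : (S n)⁻¹ • (∏ k ∈ Finset.range n, S k)⁻¹ • s =
            (∏ k ∈ Finset.range (n + 1), S k)⁻¹ • s := by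
          rw [smul_smul, Finset.prod_range_succ, mul_inv_rev]
        rw [this]
  obtain ⟨hmem, htr⟩ := main n q
  rw [htr t, convol_translate]
end
end

section
/- Let M ∈ ℝ^{d×d} be a matrix whose entries satisfy |M_{i,j}| ≤ α for all 1 ≤ i, j ≤ d, where α ≥ 0 and dα ≤ 1. Then |det(E − M)| ≥ 1 − dα, where E is the d×d identity matrix. -/
open Matrix Finset

lemma aux13 : ∀ (n : ℕ) (M : Matrix (Fin n) (Fin n) ℝ) (α : Fin n → ℝ),
    (∀ j, 0 ≤ α j) → (∀ i j, |M i j| ≤ α j) → (∑ j, α j) < 1 →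
    1 - ∑ j, α j ≤ (1 - M).det := by
  intro n
  induction n with
  | zero =>
      intro M α _ _ _
      simp [Matrix.det_isEmpty]
  | succ n IH =>
      intro M α hα hM hS
      set A : Matrix (Fin (n+1)) (Fin (n+1)) ℝ := 1 - M with hA
      set e : Fin 1 ⊕ Fin n ≃ Fin (n+1) :=
        finSumFinEquiv.trans (finCongr (Nat.add_comm 1 n)) with he
      set z : Fin (n+1) := e (Sum.inl 0) with hz
      set r : Fin n → Fin (n+1) := fun i => e (Sum.inr i) with hr
      have hrz : ∀ i, r i ≠ z := by
        intro i h
        exact Sum.inr_ne_inl (e.injective h)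
      have hrinj : Function.Injective r := fun i j h => Sum.inr_injective (e.injective h)
      -- sum decomposition
      have hsum : ∀ f : Fin (n+1) → ℝ, ∑ j, f j = f z + ∑ i, f (r i) := by
        intro f
        rw [← Equiv.sum_comp e f, Fintype.sum_sum_type]
        simp
        rfl
      set S := ∑ j, α j with hSdef
      have hRnn : 0 ≤ ∑ i, α (r i) := Finset.sum_nonneg fun i _ => hα _
      have hαz1 : α z < 1 := by
        have := hsum α
        linarith
      have haz : 1 - α z ≤ A z z := by
        have h1 : M z z ≤ α z := (abs_le.mp (hM z z)).2
        simp [hA, Matrix.sub_apply, Matrix.one_apply]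
        linarith
      have ha0 : 0 < A z z := lt_of_lt_of_le (by linarith) haz
      -- the Schur complement matrix
      set a : ℝ := A z z with hadef
      set M' : Matrix (Fin n) (Fin n) ℝ :=
        Matrix.of (fun i j => M (r i) (r j) + M (r i) z * a⁻¹ * M z (r j)) with hM'
      set α' : Fin n → ℝ := fun j => α (r j) / (1 - α z) with hα'
      have h1az : (0:ℝ) < 1 - α z := by linarith
      have hainv : a⁻¹ ≤ (1 - α z)⁻¹ := by
        apply inv_anti₀ h1az haz
      have hα'nn : ∀ j, 0 ≤ α' j := by
        intro j
        exact div_nonneg (hα _) (le_of_lt h1az)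
      have hbound : ∀ i j, |M' i j| ≤ α' j := by
        intro i j
        have h1 : |M' i j| ≤ |M (r i) (r j)| + |M (r i) z| * a⁻¹ * |M z (r j)| := by
          calc |M' i j| ≤ |M (r i) (r j)| + |M (r i) z * a⁻¹ * M z (r j)| := abs_add_le _ _
            _ = |M (r i) (r j)| + |M (r i) z| * |a⁻¹| * |M z (r j)| := by
                rw [abs_mul, abs_mul]
            _ = |M (r i) (r j)| + |M (r i) z| * a⁻¹ * |M z (r j)| := by
                rw [abs_of_nonneg (le_of_lt (inv_pos.mpr ha0))]
        have h2 : |M (r i) z| * a⁻¹ * |M z (r j)| ≤ α z * (1 - α z)⁻¹ * α (r j) := by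
          have h0 : (0:ℝ) ≤ a⁻¹ := le_of_lt (inv_pos.mpr ha0)
          have s1 : |M (r i) z| * a⁻¹ * |M z (r j)| ≤ α z * a⁻¹ * α (r j) :=
            mul_le_mul (mul_le_mul_of_nonneg_right (hM _ _) h0) (hM _ _) (abs_nonneg _)
              (mul_nonneg (hα _) h0)
          have s2 : α z * a⁻¹ * α (r j) ≤ α z * (1 - α z)⁻¹ * α (r j) :=
            mul_le_mul_of_nonneg_right (mul_le_mul_of_nonneg_left hainv (hα z)) (hα _)
          exact le_trans s1 s2
        have h3 : α (r j) + α z * (1 - α z)⁻¹ * α (r j) = α' j := by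
          simp only [hα']
          field_simp
          ring
        have := hM (r i) (r j)
        calc |M' i j| ≤ α (r j) + α z * (1 - α z)⁻¹ * α (r j) := by linarith
          _ = α' j := h3
      have hsum' : ∑ j, α' j = (S - α z) / (1 - α z) := by
        simp only [hα']
        rw [← Finset.sum_div]
        congr 1
        have := hsum α
        linarith
      have hS'lt : ∑ j, α' j < 1 := by
        rw [hsum', div_lt_one h1az]
        linarith
      have hIH := IH M' α' hα'nn hbound hS'lt
      -- now the determinant identity
      set A' := A.submatrix e e with hA'
      have hdet1 : A.det = A'.det := (Matrix.det_submatrix_equiv_self e A).symm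
      letI : Invertible A'.toBlocks₁₁ := by
        refine ⟨Matrix.of (fun _ _ => a⁻¹), ?_, ?_⟩
        · ext i j
          fin_cases i; fin_cases j
          simp only [Matrix.mul_apply, Matrix.toBlocks₁₁, Matrix.one_apply, Fin.sum_univ_one,
            Matrix.of_apply]
          show a⁻¹ * A (e (Sum.inl 0)) (e (Sum.inl 0)) = 1
          rw [← hz, ← hadef]
          simp [inv_mul_cancel₀ (ne_of_gt ha0)]
        · ext i j
          fin_cases i; fin_cases j
          simp only [Matrix.mul_apply, Matrix.toBlocks₁₁, Matrix.one_apply, Fin.sum_univ_one,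
            Matrix.of_apply]
          show A (e (Sum.inl 0)) (e (Sum.inl 0)) * a⁻¹ = 1
          rw [← hz, ← hadef]
          simp [mul_inv_cancel₀ (ne_of_gt ha0)]
      have hinvOf : ⅟ A'.toBlocks₁₁ = Matrix.of (fun _ _ : Fin 1 => a⁻¹) := rfl
      have hdet2 : A'.det = a * (A'.toBlocks₂₂ - A'.toBlocks₂₁ * ⅟ A'.toBlocks₁₁ * A'.toBlocks₁₂).det := by
        conv_lhs => rw [← Matrix.fromBlocks_toBlocks A', Matrix.det_fromBlocks₁₁]
        congr 1
        rw [Matrix.det_fin_one]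
        show A (e (Sum.inl 0)) (e (Sum.inl 0)) = a
        rw [← hz, ← hadef]
      have hschur : A'.toBlocks₂₂ - A'.toBlocks₂₁ * ⅟ A'.toBlocks₁₁ * A'.toBlocks₁₂ = 1 - M' := by
        ext i j
        rw [hinvOf]
        simp only [Matrix.sub_apply, Matrix.toBlocks₂₂, Matrix.toBlocks₂₁, Matrix.toBlocks₁₂,
          Matrix.mul_apply, Fin.sum_univ_one, Matrix.of_apply, hA', Matrix.submatrix_apply]
        have h1 : A (r i) (r j) = (if i = j then 1 else 0) - M (r i) (r j) := by
          simp only [hA, Matrix.sub_apply, Matrix.one_apply]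
          congr 1
          simp [hrinj.eq_iff]
        have h2 : A (r i) z = - M (r i) z := by
          simp [hA, Matrix.sub_apply, Matrix.one_apply, hrz i]
        have h3 : A z (r j) = - M z (r j) := by
          simp [hA, Matrix.sub_apply, Matrix.one_apply, (hrz j).symm, Ne.symm (hrz j)]
        rw [show e (Sum.inr i) = r i from rfl, show e (Sum.inr j) = r j from rfl,
          show e (Sum.inl 0) = z from rfl]
        rw [h1, h2, h3]
        simp only [hM', Matrix.sub_apply, Matrix.one_apply, Matrix.of_apply]
        try ring
      have hdetS : 0 ≤ (1 - ∑ j, α' j) := by linarith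
      have hfin : 1 - S ≤ a * (1 - M').det := by
        have hmul : (1 - α z) * (1 - ∑ j, α' j) ≤ a * (1 - M').det :=
          mul_le_mul haz hIH hdetS (le_of_lt ha0)
        have : (1 - α z) * (1 - ∑ j, α' j) = 1 - S := by
          rw [hsum']
          field_simp
          ring
        linarith
      rw [hdet1, hdet2, hschur]
      exact hfin


/-- If all entries of `M` are bounded by `α` with `d·α ≤ 1`, then `|det(E − M)| ≥ 1 − d·α`. -/
theorem stmt_13 {d : ℕ} (M : Matrix (Fin d) (Fin d) ℝ) (α : ℝ) (hα : 0 ≤ α)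
    (hM : ∀ i j, |M i j| ≤ α) (hdα : (d : ℝ) * α ≤ 1) :
    1 - (d : ℝ) * α ≤ |(1 - M).det| := by
  have hsc : (∑ _j : Fin d, α) = (d : ℝ) * α := by
    simp [Finset.sum_const, nsmul_eq_mul]
  rcases eq_or_lt_of_le hdα with h | h
  · rw [← h]
    simpa using abs_nonneg (1 - M).det
  · have haux := aux13 d M (fun _ => α) (fun _ => hα) hM (by rwa [hsc])
    rw [hsc] at haux
    exact le_trans haux (le_abs_self _)
end

section
/- Let ω : ℝ^d → ℝ be continuous and let τ : ℝ^d → ℝ^d be continuously differentiable with ‖Dτ‖_∞ := sup_{x∈ℝ^d} max_{i,j} |(Dτ)(x)_{i,j}| ≤ 1/(2d), where Dτ is the Jacobian matrix of τ. Then for every f ∈ L²(ℝ^d), the deformed function (F_{τ,ω}f)(x) := e^{2πiω(x)} f(x − τ(x)) belongs to L²(ℝ^d) and satisfies ‖F_{τ,ω}f‖₂² ≤ 2‖f‖₂². -/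
open MeasureTheory
open scoped ENNReal FourierTransform

noncomputable section

section DetLemma

open Matrix Finset

/-- Sharp determinant bound: if all entries of `A` are at most `ε` in absolute value and
`n * ε ≤ 1/2`, then `det (1 - A) ≥ 1 - n * ε`. -/
theorem det_one_sub_ge (n : ℕ) (A : Matrix (Fin n) (Fin n) ℝ) (ε : ℝ) (hε : 0 ≤ ε)
    (hA : ∀ i j, |A i j| ≤ ε) (hn : (n : ℝ) * ε ≤ 1 / 2) :
    1 - (n : ℝ) * ε ≤ (1 - A).det := by
  classical
  set M : ℕ → Matrix (Fin n) (Fin n) ℝ :=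
    fun k i j => if (i : ℕ) < k then (1 : Matrix (Fin n) (Fin n) ℝ) i j - A i j
      else (1 : Matrix (Fin n) (Fin n) ℝ) i j with hM
  have hsingle : ∀ (a : Fin n) (c : ℝ),
      (Pi.single a c : Fin n → ℝ) = c • (Pi.single a 1 : Fin n → ℝ) := by
    intro a c; funext x; by_cases h : x = a <;> simp [Pi.single_apply, h]
  have claim : ∀ k, k ≤ n → 1 - (k : ℝ) * ε ≤ (M k).det := by
    intro k
    induction k with
    | zero =>
      intro _
      have h0 : M 0 = 1 := by funext i j; simp [hM]
      simp [h0]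
    | succ k IH =>
      intro hkn
      have hk : k < n := Nat.lt_of_succ_le hkn
      have IH' := IH (le_of_lt hk)
      set κ : Fin n := ⟨k, hk⟩ with hκ
      set v : Fin n → ℝ := fun j => ((M k).updateRow κ (Pi.single j 1)).det with hv
      -- multilinearity in row κ
      have key1s : ∀ s : Finset (Fin n), ∀ r : Fin n → ℝ,
          ((M k).updateRow κ (∑ j ∈ s, Pi.single j (r j))).det = ∑ j ∈ s, r j * v j := by
        intro s
        induction s using Finset.induction_on with
        | empty =>
          intro r
          rw [Finset.sum_empty, Finset.sum_empty]
          exact det_eq_zero_of_row_eq_zero κ (by simp)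
        | @insert a s ha IHs =>
          intro r
          rw [Finset.sum_insert ha, Finset.sum_insert ha, det_updateRow_add,
            hsingle, det_updateRow_smul, IHs r]
      have key1 : ∀ r : Fin n → ℝ, ((M k).updateRow κ r).det = ∑ j, r j * v j := by
        intro r
        conv_lhs => rw [(Finset.univ_sum_single r).symm]
        rw [key1s]
      -- rows of M k
      have hrow_ge : ∀ l : Fin n, k ≤ (l : ℕ) → (M k) l = Pi.single l 1 := by
        intro l hl
        funext j
        simp only [hM, Matrix.one_apply, Pi.single_apply]
        rw [if_neg (by omega)]
        by_cases h : l = j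
        · subst h; simp
        · simp [h, Ne.symm h]
      have hrow_lt : ∀ l : Fin n, (l : ℕ) < k →
          (M k) l = fun j => (1 : Matrix (Fin n) (Fin n) ℝ) l j - A l j := by
        intro l hl; funext j; simp only [hM]; rw [if_pos hl]
      have hvκ : v κ = (M k).det := by
        rw [hv]; simp only
        rw [← hrow_ge κ le_rfl, Matrix.updateRow_eq_self]
      have hv_gt : ∀ l : Fin n, l ≠ κ → k ≤ (l : ℕ) → v l = 0 := by
        intro l hl hkl
        apply Matrix.det_zero_of_row_eq hl
        rw [Matrix.updateRow_ne hl, Matrix.updateRow_self, hrow_ge l hkl]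
      have hv_lt : ∀ l : Fin n, (l : ℕ) < k → v l = ∑ j, A l j * v j := by
        intro l hl
        have hlκ : l ≠ κ := by
          intro h; rw [h] at hl; simp [hκ] at hl
        have h0 : ((M k).updateRow κ ((M k) l)).det = 0 :=
          Matrix.det_zero_of_row_eq hlκ (by rw [Matrix.updateRow_ne hlκ, Matrix.updateRow_self])
        rw [key1 ((M k) l)] at h0
        have hexp : ∀ j, (M k) l j * v j = (if l = j then v j else 0) - A l j * v j := by
          intro j
          rw [hrow_lt l hl]
          by_cases h : l = j <;> simp [Matrix.one_apply, h, sub_mul]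
        rw [Finset.sum_congr rfl (fun j _ => hexp j), Finset.sum_sub_distrib] at h0
        simp only [Finset.sum_ite_eq, Finset.mem_univ, if_true] at h0
        linarith [h0]
      -- the ℓ¹ bound on v
      set S : ℝ := ∑ j, |v j| with hS
      have hSnn : 0 ≤ S := Finset.sum_nonneg fun j _ => abs_nonneg _
      have hkε : (k : ℝ) * ε ≤ (n : ℝ) * ε := by
        apply mul_le_mul_of_nonneg_right _ hε
        exact_mod_cast le_of_lt hk
      have hk1ε : ((k : ℝ) + 1) * ε ≤ (n : ℝ) * ε := by
        apply mul_le_mul_of_nonneg_right _ hε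
        exact_mod_cast hkn
      have hdetpos : (0 : ℝ) < (M k).det := by nlinarith
      have hvbound : ∀ j : Fin n, |v j| ≤
          (if (j : ℕ) < k then ε * S else 0) + (if j = κ then (M k).det else 0) := by
        intro j
        by_cases hj : (j : ℕ) < k
        · have hjκ : j ≠ κ := by intro h; rw [h] at hj; simp [hκ] at hj
          rw [if_pos hj, if_neg hjκ, add_zero, hv_lt j hj]
          calc |∑ i, A j i * v i| ≤ ∑ i, |A j i * v i| := Finset.abs_sum_le_sum_abs _ _
            _ ≤ ∑ i, ε * |v i| := by
                apply Finset.sum_le_sum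
                intro i _
                rw [abs_mul]
                exact mul_le_mul_of_nonneg_right (hA j i) (abs_nonneg _)
            _ = ε * S := by rw [hS, Finset.mul_sum]
        · rw [if_neg hj]
          by_cases hjκ : j = κ
          · rw [if_pos hjκ, hjκ, hvκ, zero_add, abs_of_pos hdetpos]
          · rw [if_neg hjκ, hv_gt j hjκ (le_of_not_gt hj)]
            simp
      have hSsum : S ≤ (k : ℝ) * (ε * S) + (M k).det := by
        have h1 : S ≤ ∑ j : Fin n, ((if (j : ℕ) < k then ε * S else 0) +
            (if j = κ then (M k).det else 0)) := Finset.sum_le_sum fun j _ => hvbound j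
        rw [Finset.sum_add_distrib] at h1
        have h2 : ∑ j : Fin n, (if (j : ℕ) < k then ε * S else 0) ≤ (k : ℝ) * (ε * S) := by
          rw [← Finset.sum_filter, Finset.sum_const]
          have hcard : (Finset.univ.filter (fun j : Fin n => (j : ℕ) < k)).card ≤ k := by
            have := Finset.card_le_card_of_injOn
                (s := Finset.univ.filter (fun j : Fin n => (j : ℕ) < k))
                (t := Finset.range k) (fun j : Fin n => (j : ℕ))
              (fun j hj => Finset.mem_range.mpr (Finset.mem_filter.mp hj).2)
              (fun a _ b _ h => Fin.val_injective h)
            simpa using this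
          have hεS : 0 ≤ ε * S := mul_nonneg hε hSnn
          calc ((Finset.univ.filter (fun j : Fin n => (j : ℕ) < k)).card : ℕ) • (ε * S)
              = ((Finset.univ.filter (fun j : Fin n => (j : ℕ) < k)).card : ℝ) * (ε * S) := by
                rw [nsmul_eq_mul]
            _ ≤ (k : ℝ) * (ε * S) := by
                apply mul_le_mul_of_nonneg_right _ hεS
                exact_mod_cast hcard
        have h3 : ∑ j : Fin n, (if j = κ then (M k).det else 0) = (M k).det := by
          rw [Finset.sum_ite_eq' Finset.univ κ fun _ => (M k).det]
          exact if_pos (Finset.mem_univ κ)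
        linarith
      -- the determinant of M (k+1)
      have hstep : M (k + 1) = (M k).updateRow κ (fun j =>
          (1 : Matrix (Fin n) (Fin n) ℝ) κ j - A κ j) := by
        funext i j
        by_cases h : i = κ
        · subst h
          rw [Matrix.updateRow_self, hM]
          exact if_pos (Nat.lt_succ_self k)
        · rw [Matrix.updateRow_ne h]
          simp only [hM]
          have hne : (i : ℕ) ≠ k := fun hh => h (Fin.ext hh)
          exact if_congr ⟨by omega, by omega⟩ rfl rfl
      have hdet1 : (M (k + 1)).det = (M k).det - ∑ j, A κ j * v j := by
        rw [hstep, key1]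
        have : ∀ j : Fin n, ((1 : Matrix (Fin n) (Fin n) ℝ) κ j - A κ j) * v j
            = (if κ = j then v j else 0) - A κ j * v j := by
          intro j
          by_cases h : κ = j <;> simp [Matrix.one_apply, h, sub_mul]
        rw [Finset.sum_congr rfl (fun j _ => this j), Finset.sum_sub_distrib]
        simp only [Finset.sum_ite_eq, Finset.mem_univ, if_true]
        rw [hvκ]
      have habs : |∑ j, A κ j * v j| ≤ ε * S := by
        calc |∑ j, A κ j * v j| ≤ ∑ j, |A κ j * v j| := Finset.abs_sum_le_sum_abs _ _
          _ ≤ ∑ j, ε * |v j| := by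
              apply Finset.sum_le_sum
              intro i _
              rw [abs_mul]
              exact mul_le_mul_of_nonneg_right (hA κ i) (abs_nonneg _)
          _ = ε * S := by rw [hS, Finset.mul_sum]
      rw [hdet1]
      push_cast
      have h4 : ∑ j, A κ j * v j ≤ ε * S := le_trans (le_abs_self _) habs
      nlinarith [mul_le_mul_of_nonneg_left hSsum hε, sq_nonneg ε, sq_nonneg S]
  have hfin : M n = 1 - A := by
    funext i j
    simp only [hM, Matrix.sub_apply]
    rw [if_pos i.isLt]
  rw [← hfin]
  exact claim n le_rfl

end DetLemma

section OpNorm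

/-- An operator-norm bound from entrywise bounds. -/
theorem clm_norm_le_of_entries {d : ℕ} (L : Ed d →L[ℝ] Ed d) (ε : ℝ) (hε : 0 ≤ ε)
    (h : ∀ i j : Fin d, |L (EuclideanSpace.single j 1) i| ≤ ε) (v : Ed d) :
    ‖L v‖ ≤ ((d : ℝ) * ε) * ‖v‖ := by
  classical
  have hbasis : v = ∑ j : Fin d, v j • (EuclideanSpace.single j (1 : ℝ) : Ed d) := by
    have hb := ((EuclideanSpace.basisFun (Fin d) ℝ).toBasis).sum_repr v
    simp only [OrthonormalBasis.coe_toBasis_repr_apply, EuclideanSpace.basisFun_repr,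
      OrthonormalBasis.coe_toBasis, EuclideanSpace.basisFun_apply] at hb
    exact hb.symm
  set T : ℝ := ∑ j : Fin d, |v j| with hT
  have hTnn : 0 ≤ T := Finset.sum_nonneg fun _ _ => abs_nonneg _
  have happ : ∀ i : Fin d, |(L v) i| ≤ ε * T := by
    intro i
    have hLv : (L v) i = ∑ j : Fin d, v j * (L (EuclideanSpace.single j 1)) i := by
      conv_lhs => rw [hbasis]
      rw [map_sum]
      rw [show ((∑ x : Fin d, L (v x • EuclideanSpace.single x 1)) i)
          = EuclideanSpace.proj (𝕜 := ℝ) i (∑ x : Fin d, L (v x • EuclideanSpace.single x 1))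
          from rfl]
      rw [map_sum]
      refine Finset.sum_congr rfl fun j _ => ?_
      rw [show L (v j • EuclideanSpace.single j 1)
          = v j • L (EuclideanSpace.single j 1) from map_smul L _ _]
      rw [_root_.map_smul (EuclideanSpace.proj (𝕜 := ℝ) i)]
      simp [smul_eq_mul]
    rw [hLv]
    calc |∑ j : Fin d, v j * (L (EuclideanSpace.single j 1)) i|
        ≤ ∑ j : Fin d, |v j * (L (EuclideanSpace.single j 1)) i| :=
          Finset.abs_sum_le_sum_abs _ _
      _ ≤ ∑ j : Fin d, |v j| * ε := by
          apply Finset.sum_le_sum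
          intro j _
          rw [abs_mul]
          exact mul_le_mul_of_nonneg_left (h i j) (abs_nonneg _)
      _ = ε * T := by rw [hT, ← Finset.sum_mul, mul_comm]
  have hvsq : ∑ j : Fin d, (v j) ^ 2 = ‖v‖ ^ 2 := by
    rw [EuclideanSpace.norm_eq]
    rw [Real.sq_sqrt (Finset.sum_nonneg fun _ _ => sq_nonneg _)]
    exact Finset.sum_congr rfl fun j _ => by rw [Real.norm_eq_abs, sq_abs]
  have hT2 : T ^ 2 ≤ (d : ℝ) * ‖v‖ ^ 2 := by
    have := sq_sum_le_card_mul_sum_sq (s := Finset.univ) (f := fun j : Fin d => |v j|)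
    simp only [Finset.card_univ, Fintype.card_fin, sq_abs] at this
    rw [hvsq] at this
    exact_mod_cast this
  have hsum : ∑ i : Fin d, ‖(L v) i‖ ^ 2 ≤ ((d : ℝ) * ε * ‖v‖) ^ 2 := by
    have h1 : ∑ i : Fin d, ‖(L v) i‖ ^ 2 ≤ (d : ℝ) * (ε * T) ^ 2 := by
      calc ∑ i : Fin d, ‖(L v) i‖ ^ 2 ≤ ∑ _i : Fin d, (ε * T) ^ 2 := by
            apply Finset.sum_le_sum
            intro i _
            rw [Real.norm_eq_abs]
            exact pow_le_pow_left₀ (abs_nonneg _) (happ i) 2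
        _ = (d : ℝ) * (ε * T) ^ 2 := by
            rw [Finset.sum_const, Finset.card_univ, Fintype.card_fin, nsmul_eq_mul]
    have h2 : (d : ℝ) * (ε * T) ^ 2 ≤ ((d : ℝ) * ε * ‖v‖) ^ 2 := by
      have hd0 : (0 : ℝ) ≤ (d : ℝ) := Nat.cast_nonneg d
      have h3 := mul_le_mul_of_nonneg_left hT2 (mul_nonneg hd0 (sq_nonneg ε))
      nlinarith [h3]
    linarith
  rw [EuclideanSpace.norm_eq]
  calc Real.sqrt (∑ i : Fin d, ‖(L v) i‖ ^ 2) ≤ Real.sqrt (((d : ℝ) * ε * ‖v‖) ^ 2) :=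
        Real.sqrt_le_sqrt hsum
    _ = (d : ℝ) * ε * ‖v‖ := Real.sqrt_sq (by positivity)

end OpNorm

/-- Time-frequency deformations of L² functions stay in L², with energy at most doubled. -/
theorem stmt_14 {d : ℕ} (ω : Ed d → ℝ) (hω : Continuous ω)
    (τ : Ed d → Ed d) (hτ : ContDiff ℝ 1 τ)
    (hDτ : ∀ (x : Ed d) (i j : Fin d),
      |fderiv ℝ τ x (EuclideanSpace.single j 1) i| ≤ 1 / (2 * (d : ℝ))) :
    ∀ f : Ed d → ℂ, MemLp f 2 volume →
      MemLp (fun x => Complex.exp (((2 * Real.pi * ω x : ℝ) : ℂ) * Complex.I) * f (x - τ x))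
        2 volume ∧
      eLpNorm (fun x => Complex.exp (((2 * Real.pi * ω x : ℝ) : ℂ) * Complex.I) * f (x - τ x))
          2 volume ^ 2 ≤
        2 * eLpNorm f 2 volume ^ 2 := by
  classical
  intro f hf
  set ε : ℝ := 1 / (2 * (d : ℝ)) with hεdef
  have hε0 : 0 ≤ ε := by positivity
  have hdε : (d : ℝ) * ε ≤ 1 / 2 := by
    rcases Nat.eq_zero_or_pos d with h0 | hp
    · subst h0; norm_num [hεdef]
    · have hd : (0 : ℝ) < d := by exact_mod_cast hp
      rw [hεdef]
      rw [mul_one_div, div_le_div_iff₀ (by positivity) (by norm_num)]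
      nlinarith
  set φ : Ed d → Ed d := fun x => x - τ x with hφdef
  have hτdiff : Differentiable ℝ τ := hτ.differentiable one_ne_zero
  set φ' : Ed d → (Ed d →L[ℝ] Ed d) :=
    fun x => ContinuousLinearMap.id ℝ (Ed d) - fderiv ℝ τ x with hφ'def
  have hφ' : ∀ x, HasFDerivAt φ (φ' x) x := by
    intro x
    exact (hasFDerivAt_id x).sub (hτdiff x).hasFDerivAt
  -- determinant bound
  have hdet : ∀ x, 1 / 2 ≤ |(φ' x).det| := by
    intro x
    set b := (EuclideanSpace.basisFun (Fin d) ℝ).toBasis with hbdef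
    set A : Matrix (Fin d) (Fin d) ℝ :=
      Matrix.of fun i j => fderiv ℝ τ x (EuclideanSpace.single j 1) i with hA
    have hmat : LinearMap.toMatrix b b (φ' x : Ed d →ₗ[ℝ] Ed d) = 1 - A := by
      ext i j
      rw [LinearMap.toMatrix_apply]
      simp only [hbdef, OrthonormalBasis.coe_toBasis, EuclideanSpace.basisFun_apply,
        OrthonormalBasis.coe_toBasis_repr_apply, EuclideanSpace.basisFun_repr]
      simp only [hφ'def, ContinuousLinearMap.coe_sub', Pi.sub_apply,
        ContinuousLinearMap.coe_id', id_eq, ContinuousLinearMap.coe_coe]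
      simp only [Matrix.sub_apply, Matrix.one_apply, hA, Matrix.of_apply]
      simp [PiLp.sub_apply, EuclideanSpace.single_apply, eq_comm]
    have hcd : (φ' x).det = (1 - A).det := by
      rw [← hmat]
      exact (LinearMap.det_toMatrix b _).symm
    have hge := det_one_sub_ge d A ε hε0 (fun i j => hDτ x i j) hdε
    have h12 : (1 : ℝ) / 2 ≤ (1 - A).det := le_trans (by linarith) hge
    rw [hcd]
    exact le_trans h12 (le_abs_self _)
  -- Lipschitz bound and injectivity
  have hLbound : ∀ z : Ed d, ‖fderiv ℝ τ z‖ ≤ 1 / 2 := by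
    intro z
    apply ContinuousLinearMap.opNorm_le_bound _ (by norm_num)
    intro v
    calc ‖fderiv ℝ τ z v‖ ≤ ((d : ℝ) * ε) * ‖v‖ :=
          clm_norm_le_of_entries (fderiv ℝ τ z) ε hε0 (fun i j => hDτ z i j) v
      _ ≤ 1 / 2 * ‖v‖ := mul_le_mul_of_nonneg_right hdε (norm_nonneg v)
  have hinj : Function.Injective φ := by
    intro x y hxy
    have h1 : x + τ y = y + τ x := by
      have := hxy
      simp only [hφdef] at this
      rw [sub_eq_sub_iff_add_eq_add] at this
      exact this
    have h2 : x - y = τ x - τ y := by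
      rw [sub_eq_sub_iff_add_eq_add]
      rw [h1]
      rw [add_comm]
    have h3 : ‖τ x - τ y‖ ≤ 1 / 2 * ‖x - y‖ :=
      Convex.norm_image_sub_le_of_norm_fderiv_le (fun z _ => hτdiff z)
        (fun z _ => hLbound z) convex_univ (Set.mem_univ y) (Set.mem_univ x)
    rw [← h2] at h3
    have h4 : ‖x - y‖ = 0 := by nlinarith [norm_nonneg (x - y)]
    have h5 : x - y = 0 := norm_eq_zero.mp h4
    exact sub_eq_zero.mp h5
  -- change of variables bound
  have hcov : ∀ g : Ed d → ℝ≥0∞, (∫⁻ x, g (φ x)) ≤ 2 * ∫⁻ y, g y := by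
    intro g
    have hC := lintegral_image_eq_lintegral_abs_det_fderiv_mul (volume : Measure (Ed d))
      MeasurableSet.univ (fun x _ => (hφ' x).hasFDerivWithinAt) (Set.injOn_of_injective hinj)
      g
    have hpt : ∀ x, g (φ x) ≤ 2 * (ENNReal.ofReal |(φ' x).det| * g (φ x)) := by
      intro x
      rw [← mul_assoc]
      conv_lhs => rw [← one_mul (g (φ x))]
      apply mul_le_mul_left
      have h1 : ENNReal.ofReal (1 / 2) ≤ ENNReal.ofReal |(φ' x).det| :=
        ENNReal.ofReal_le_ofReal (hdet x)
      calc (1 : ℝ≥0∞) = ENNReal.ofReal 1 := ENNReal.ofReal_one.symm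
        _ = ENNReal.ofReal (2 * (1 / 2)) := by norm_num
        _ = ENNReal.ofReal 2 * ENNReal.ofReal (1 / 2) := ENNReal.ofReal_mul (by norm_num)
        _ = 2 * ENNReal.ofReal (1 / 2) := by rw [ENNReal.ofReal_ofNat]
        _ ≤ 2 * ENNReal.ofReal |(φ' x).det| := mul_le_mul_right h1 2
    calc (∫⁻ x, g (φ x))
        ≤ ∫⁻ x, 2 * (ENNReal.ofReal |(φ' x).det| * g (φ x)) := lintegral_mono hpt
      _ = 2 * ∫⁻ x, ENNReal.ofReal |(φ' x).det| * g (φ x) :=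
          lintegral_const_mul' 2 _ (by norm_num)
      _ = 2 * ∫⁻ x in Set.univ, ENNReal.ofReal |(φ' x).det| * g (φ x) := by
          rw [setLIntegral_univ]
      _ = 2 * ∫⁻ y in φ '' Set.univ, g y := by rw [← hC]
      _ ≤ 2 * ∫⁻ y, g y := mul_le_mul_right (setLIntegral_le_lintegral _ _) 2
  -- quasi measure preserving
  have hφm : Measurable φ := (continuous_id.sub hτ.continuous).measurable
  have hqmp : Measure.QuasiMeasurePreserving φ
      (volume : Measure (Ed d)) (volume : Measure (Ed d)) := by
    refine ⟨hφm, ?_⟩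
    apply Measure.AbsolutelyContinuous.mk
    intro s hs h0
    rw [Measure.map_apply hφm hs]
    have hind : volume (φ ⁻¹' s) = ∫⁻ x, s.indicator (fun _ => (1 : ℝ≥0∞)) (φ x) := by
      have heq : ∀ x, s.indicator (fun _ => (1 : ℝ≥0∞)) (φ x)
          = (φ ⁻¹' s).indicator (fun _ => (1 : ℝ≥0∞)) x := by
        intro x
        by_cases h : φ x ∈ s <;> simp [Set.indicator_apply, h]
      rw [lintegral_congr heq, lintegral_indicator (hφm hs)]
      simp
    have hle := hcov (s.indicator fun _ => (1 : ℝ≥0∞))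
    rw [← hind] at hle
    have : (∫⁻ y, s.indicator (fun _ => (1 : ℝ≥0∞)) y) = volume s := by
      rw [lintegral_indicator hs]
      simp
    rw [this, h0, mul_zero] at hle
    exact le_antisymm (hind ▸ hle) zero_le
  -- measurability of the deformed function
  have hcont : Continuous fun x : Ed d =>
      Complex.exp (((2 * Real.pi * ω x : ℝ) : ℂ) * Complex.I) := by
    apply Complex.continuous_exp.comp
    exact (Complex.continuous_ofReal.comp ((continuous_const.mul hω))).mul continuous_const
  have hcomp : AEStronglyMeasurable (fun x => f (φ x)) volume :=
    hf.1.comp_quasiMeasurePreserving hqmp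
  set g : Ed d → ℂ :=
    fun x => Complex.exp (((2 * Real.pi * ω x : ℝ) : ℂ) * Complex.I) * f (x - τ x) with hgdef
  have hgm : AEStronglyMeasurable g volume := by
    apply hcont.aestronglyMeasurable.mul
    exact hcomp
  -- norms
  have hnorm : ∀ x, (‖g x‖₊ : ℝ≥0∞) = (‖f (φ x)‖₊ : ℝ≥0∞) := by
    intro x
    have h1 : ‖Complex.exp (((2 * Real.pi * ω x : ℝ) : ℂ) * Complex.I)‖ = 1 := by
      exact Complex.norm_exp_ofReal_mul_I _
    have : ‖g x‖ = ‖f (φ x)‖ := by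
      rw [hgdef]
      simp only [norm_mul, h1, one_mul, hφdef]
    have h2 : ‖g x‖₊ = ‖f (φ x)‖₊ := NNReal.eq this
    rw [h2]
  -- squared L² norms as lintegrals
  have hsq : ∀ u : Ed d → ℂ, eLpNorm u 2 volume ^ 2 = ∫⁻ x, (‖u x‖₊ : ℝ≥0∞) ^ 2 := by
    intro u
    rw [eLpNorm_eq_lintegral_rpow_enorm_toReal two_ne_zero ENNReal.ofNat_ne_top]
    rw [ENNReal.toReal_ofNat]
    rw [← ENNReal.rpow_natCast _ 2, ← ENNReal.rpow_mul]
    norm_num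
    simp only [enorm_eq_nnnorm]
  have hbound : eLpNorm g 2 volume ^ 2 ≤ 2 * eLpNorm f 2 volume ^ 2 := by
    rw [hsq g, hsq f]
    have heq : (∫⁻ x, (‖g x‖₊ : ℝ≥0∞) ^ 2)
        = ∫⁻ x, (fun y => (‖f y‖₊ : ℝ≥0∞) ^ 2) (φ x) :=
      lintegral_congr fun x => by rw [hnorm x]
    rw [heq]
    exact hcov fun y => (‖f y‖₊ : ℝ≥0∞) ^ 2
  have hfin : eLpNorm g 2 volume < ⊤ := by
    have h2 : eLpNorm g 2 volume ^ 2 < ⊤ := by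
      apply lt_of_le_of_lt hbound
      exact ENNReal.mul_lt_top (by norm_num) (ENNReal.pow_lt_top hf.2)
    by_contra hc
    rw [not_lt, top_le_iff] at hc
    rw [hc, ENNReal.top_pow (by norm_num)] at h2
    exact lt_irrefl _ h2
  exact ⟨⟨hgm, hfin⟩, hbound⟩
end
end
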